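/- There exists a constant C > 0 such that for all a, b ∈ ℝ³ with aᵢ < bᵢ for i = 1,2,3, and every function f : ℝ³ → ℝ that is continuously differentiable on a neighborhood of the closure of the rectangle R(a,b), one has ∫_{R(a,b)} |f(y) − f_{R(a,b)}| dy ≤ C |b − a| ∫_{R(a,b)} |∇f(y)| dy. The constant C is independent of a and b (in particular of the aspect ratio of the rectangle). -/

import Mathlib

open MeasureTheory
open scoped ENNReal

/-- The open rectangle `R(a,b) = (a₁,b₁)×(a₂,b₂)×(a₃,b₃)` in ℝ³ with sides parallel to the
coordinate axes. -/
def rect (a b : EuclideanSpace ℝ (Fin 3)) : Set (EuclideanSpace ℝ (Fin 3)) :=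
  {x | ∀ i, x i ∈ Set.Ioo (a i) (b i)}

lemma rect_isOpen (a b : EuclideanSpace ℝ (Fin 3)) : IsOpen (rect a b) := by
  have : rect a b = ⋂ i, (fun x : EuclideanSpace ℝ (Fin 3) => x i) ⁻¹' Set.Ioo (a i) (b i) := by
    ext x; simp [rect]
  rw [this]
  exact isOpen_iInter_of_finite fun i =>
    (isOpen_Ioo).preimage (EuclideanSpace.proj i).continuous

lemma rect_convex (a b : EuclideanSpace ℝ (Fin 3)) : Convex ℝ (rect a b) := by
  intro x hx y hy s t hs ht hst i
  have : (s • x + t • y) i = s * x i + t * y i := rfl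
  rw [this]
  exact convex_Ioo (a i) (b i) (hx i) (hy i) hs ht hst

lemma rect_compact_closure (a b : EuclideanSpace ℝ (Fin 3)) : IsCompact (closure (rect a b)) := by
  have hK : IsCompact {x : EuclideanSpace ℝ (Fin 3) | ∀ i, x i ∈ Set.Icc (a i) (b i)} := by
    have : {x : EuclideanSpace ℝ (Fin 3) | ∀ i, x i ∈ Set.Icc (a i) (b i)} =
        (EuclideanSpace.equiv (Fin 3) ℝ).toHomeomorph ⁻¹' (Set.univ.pi fun i => Set.Icc (a i) (b i)) := by
      ext x
      exact ⟨fun h i _ => h i, fun h i => h i trivial⟩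
    rw [this, Homeomorph.isCompact_preimage]
    exact isCompact_univ_pi fun i => isCompact_Icc
  refine hK.of_isClosed_subset isClosed_closure (closure_minimal ?_ ?_)
  · intro x hx i; exact Set.Ioo_subset_Icc_self (hx i)
  · have : {x : EuclideanSpace ℝ (Fin 3) | ∀ i, x i ∈ Set.Icc (a i) (b i)} =
        ⋂ i, (fun x : EuclideanSpace ℝ (Fin 3) => x i) ⁻¹' Set.Icc (a i) (b i) := by
      ext x; simp
    rw [this]
    exact isClosed_iInter fun i => isClosed_Icc.preimage (EuclideanSpace.proj i).continuous

lemma rect_nonempty (a b : EuclideanSpace ℝ (Fin 3)) (hab : ∀ i, a i < b i) :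
    ((2:ℝ)⁻¹ • (a + b)) ∈ rect a b := by
  intro i
  have : ((2:ℝ)⁻¹ • (a + b)) i = 2⁻¹ * (a i + b i) := rfl
  rw [this]
  constructor <;> nlinarith [hab i]

lemma rect_norm_sub_le (a b x y : EuclideanSpace ℝ (Fin 3)) (hx : x ∈ rect a b)
    (hy : y ∈ rect a b) : ‖x - y‖ ≤ ‖b - a‖ := by
  rw [EuclideanSpace.norm_eq, EuclideanSpace.norm_eq]
  apply Real.sqrt_le_sqrt
  apply Finset.sum_le_sum
  intro i _
  have h1 : (x - y) i = x i - y i := rfl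
  have h2 : (b - a) i = b i - a i := rfl
  rw [h1, h2, Real.norm_eq_abs, Real.norm_eq_abs]
  have hxi := hx i; have hyi := hy i
  simp only [Set.mem_Ioo] at hxi hyi
  have : |x i - y i| ≤ b i - a i := by
    rw [abs_le]; constructor <;> nlinarith [hxi.1, hxi.2, hyi.1, hyi.2]
  have h3 : |x i - y i| ≤ |b i - a i| := this.trans (le_abs_self _)
  exact pow_le_pow_left₀ (abs_nonneg _) h3 2

set_option maxHeartbeats 1000000 in
/-- Poincaré's inequality on rectangles, with a constant independent of the rectangle (in
particular of its aspect ratio): there exists `C > 0` such that for all `a < b` in ℝ³ and every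
`f` continuously differentiable on a neighborhood of the closure of `R(a,b)`,
`∫_{R(a,b)} |f(y) − f_{R(a,b)}| dy ≤ C |b − a| ∫_{R(a,b)} |∇f(y)| dy`,
where `f_{R(a,b)}` is the mean value of `f` over `R(a,b)`. -/
theorem stmt_0 :
    ∃ C : ℝ, 0 < C ∧
      ∀ a b : EuclideanSpace ℝ (Fin 3), (∀ i, a i < b i) →
        ∀ f : EuclideanSpace ℝ (Fin 3) → ℝ,
          (∃ U : Set (EuclideanSpace ℝ (Fin 3)),
            IsOpen U ∧ closure (rect a b) ⊆ U ∧ ContDiffOn ℝ 1 f U) →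
          ∫ y in rect a b, |f y - (∫ z in rect a b, f z) / (volume (rect a b)).toReal| ≤
            C * ‖b - a‖ * ∫ y in rect a b, ‖fderiv ℝ f y‖ := by
  refine ⟨8, by norm_num, ?_⟩
  intro a b hab f hfex
  obtain ⟨U, hUo, hUc, hf⟩ := hfex
  set R := rect a b with hRdef
  have hRm : MeasurableSet R := (rect_isOpen a b).measurableSet
  have hRU : R ⊆ U := subset_closure.trans hUc
  have hcl : IsCompact (closure R) := rect_compact_closure a b
  have hfc : ContinuousOn f (closure R) := hf.continuousOn.mono hUc
  have hdc : ContinuousOn (fderiv ℝ f) U := hf.continuousOn_fderiv_of_isOpen hUo le_rfl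
  set g : EuclideanSpace ℝ (Fin 3) → ℝ := fun z => ‖fderiv ℝ f z‖ with hgdef
  have hgc : ContinuousOn g (closure R) := (hdc.mono hUc).norm
  obtain ⟨M, hM⟩ : ∃ M, ∀ x ∈ closure R, ‖f x‖ ≤ M := hcl.exists_bound_of_continuousOn hfc
  obtain ⟨M', hM'⟩ : ∃ M', ∀ x ∈ closure R, ‖fderiv ℝ f x‖ ≤ M' :=
    hcl.exists_bound_of_continuousOn (hdc.mono hUc)
  set V := volume R with hVdef
  have hV0 : V ≠ 0 :=
    ((rect_isOpen a b).measure_pos volume ⟨_, rect_nonempty a b hab⟩).ne'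
  have hVtop : V ≠ ⊤ := (lt_of_le_of_lt (measure_mono subset_closure) hcl.measure_lt_top).ne
  set c : ℝ := (∫ z in R, f z) / V.toReal with hcdef
  set G : EuclideanSpace ℝ (Fin 3) → ℝ≥0∞ :=
    R.indicator (fun z => ENNReal.ofReal (g z)) with hGdef
  have hGm : Measurable G := ((measurable_fderiv ℝ f).norm.ennreal_ofReal).indicator hRm
  set IG := ∫⁻ z, G z with hIGdef
  have hIG_eq : IG = ∫⁻ z in R, ENNReal.ofReal (g z) := lintegral_indicator hRm _
  have hIG_top : IG ≠ ⊤ := by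
    rw [hIG_eq]
    have hle : (∫⁻ z in R, ENNReal.ofReal (g z)) ≤ ENNReal.ofReal M' * V :=
      calc (∫⁻ z in R, ENNReal.ofReal (g z)) ≤ ∫⁻ _z in R, ENNReal.ofReal M' :=
          lintegral_mono_ae ((ae_restrict_iff' hRm).2 (ae_of_all _ fun z hz =>
            ENNReal.ofReal_le_ofReal (hM' z (subset_closure hz))))
        _ = ENNReal.ofReal M' * V := by rw [setLIntegral_const]
    exact ne_top_of_le_ne_top (ENNReal.mul_ne_top ENNReal.ofReal_ne_top hVtop) hle
  have hIG_toReal : IG.toReal = ∫ z in R, g z := by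
    rw [hIG_eq, integral_eq_lintegral_of_nonneg_ae (ae_of_all _ fun z => norm_nonneg _)
      ((hgc.mono subset_closure).aestronglyMeasurable hRm)]
  have hfi : IntegrableOn f R volume :=
    (hfc.integrableOn_compact hcl).mono_set subset_closure
  have hseg : ∀ x ∈ R, ∀ y ∈ R, ∀ t ∈ Set.Icc (0:ℝ) 1, y + t • (x - y) ∈ R := by
    intro x hx y hy t ht
    have heq : y + t • (x - y) = (1 - t) • y + t • x := by module
    rw [heq]
    exact rect_convex a b hy hx (by linarith [ht.2]) ht.1 (by ring)
  have claim1 : ∀ x ∈ R, ENNReal.ofReal |f x - c| ≤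
      V⁻¹ * ∫⁻ y in R, ENNReal.ofReal |f x - f y| := by
    intro x hx
    set L := ∫⁻ y in R, ENNReal.ofReal |f x - f y| with hLdef
    have hmeas : AEStronglyMeasurable (fun y => |f x - f y|) (volume.restrict R) :=
      ((continuousOn_const.sub (hfc.mono subset_closure)).abs).aestronglyMeasurable hRm
    have hL_toReal : (∫ y in R, |f x - f y|) = L.toReal :=
      integral_eq_lintegral_of_nonneg_ae (ae_of_all _ fun y => abs_nonneg _) hmeas
    have hL_top : L ≠ ⊤ := by
      have hle : L ≤ ENNReal.ofReal (M + M) * V := by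
        calc L ≤ ∫⁻ _y in R, ENNReal.ofReal (M + M) := by
              refine lintegral_mono_ae ((ae_restrict_iff' hRm).2 (ae_of_all _ fun y hy => ?_))
              refine ENNReal.ofReal_le_ofReal ?_
              have h1 := hM x (subset_closure hx)
              have h2 := hM y (subset_closure hy)
              calc |f x - f y| = ‖f x - f y‖ := (Real.norm_eq_abs _).symm
                _ ≤ ‖f x‖ + ‖f y‖ := norm_sub_le _ _
                _ ≤ M + M := add_le_add h1 h2
          _ = ENNReal.ofReal (M + M) * V := setLIntegral_const _ _
      exact ne_top_of_le_ne_top (ENNReal.mul_ne_top ENNReal.ofReal_ne_top hVtop) hle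
    have hVt0 : (0:ℝ) < V.toReal := ENNReal.toReal_pos hV0 hVtop
    have hconst : (∫ _y in R, f x ∂volume) = V.toReal * f x := by
      rw [setIntegral_const, smul_eq_mul]; rfl
    have hkey : f x - c = (∫ y in R, (f x - f y)) / V.toReal := by
      rw [integral_sub (integrableOn_const (C := f x) hVtop) hfi, hconst, hcdef]
      field_simp
    have habs : |f x - c| ≤ L.toReal / V.toReal := by
      rw [hkey, abs_div, abs_of_pos hVt0]
      gcongr
      calc |∫ y in R, (f x - f y)| = ‖∫ y in R, (f x - f y)‖ := (Real.norm_eq_abs _).symm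
        _ ≤ ∫ y in R, ‖f x - f y‖ := norm_integral_le_integral_norm _
        _ = L.toReal := by simp only [Real.norm_eq_abs]; exact hL_toReal
    refine (ENNReal.ofReal_le_ofReal habs).trans ?_
    rw [div_eq_mul_inv, ENNReal.ofReal_mul ENNReal.toReal_nonneg,
      ENNReal.ofReal_toReal hL_top, ENNReal.ofReal_inv_of_pos hVt0,
      ENNReal.ofReal_toReal hVtop, mul_comm]
  have claim2 : ∀ x ∈ R, ∀ y ∈ R, ENNReal.ofReal |f x - f y| ≤
      ENNReal.ofReal ‖b - a‖ * ∫⁻ t in Set.Ioc (0:ℝ) 1, G (y + t • (x - y)) := by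
    intro x hx y hy
    set γ : ℝ → EuclideanSpace ℝ (Fin 3) := fun t => y + t • (x - y) with hγdef
    have hγc : Continuous γ := continuous_const.add (continuous_id.smul continuous_const)
    have hγR : ∀ t ∈ Set.Icc (0:ℝ) 1, γ t ∈ R := fun t ht => hseg x hx y hy t ht
    have hγU : ∀ t ∈ Set.Icc (0:ℝ) 1, γ t ∈ U := fun t ht => hRU (hγR t ht)
    have hder : ∀ t ∈ Set.Icc (0:ℝ) 1,
        HasDerivAt (fun s => f (γ s)) ((fderiv ℝ f (γ t)) (x - y)) t := by
      intro t ht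
      have hd : DifferentiableAt ℝ f (γ t) :=
        (hf.contDiffAt (hUo.mem_nhds (hγU t ht))).differentiableAt one_ne_zero
      have h2 : HasDerivAt γ (x - y) t := by
        have h3 : HasDerivAt (fun s : ℝ => s • (x - y)) ((1:ℝ) • (x - y)) t :=
          (hasDerivAt_id t).smul_const (x - y)
        simpa only [one_smul] using h3.const_add y
      exact hd.hasFDerivAt.comp_hasDerivAt t h2
    have h1 : ContinuousOn (fun t => fderiv ℝ f (γ t)) (Set.Icc (0:ℝ) 1) :=
      hdc.comp hγc.continuousOn (fun t ht => hγU t ht)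
    have hcontd : ContinuousOn (fun t => (fderiv ℝ f (γ t)) (x - y)) (Set.Icc (0:ℝ) 1) :=
      h1.clm_apply continuousOn_const
    have hInt : IntervalIntegrable (fun t => (fderiv ℝ f (γ t)) (x - y)) volume 0 1 :=
      (hcontd.mono (by rw [Set.uIcc_of_le zero_le_one])).intervalIntegrable
    have hγ1 : γ 1 = x := by show y + (1:ℝ) • (x - y) = x; module
    have hγ0 : γ 0 = y := by show y + (0:ℝ) • (x - y) = y; module
    have heq : (∫ t in (0:ℝ)..1, (fderiv ℝ f (γ t)) (x - y)) = f x - f y := by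
      rw [intervalIntegral.integral_eq_sub_of_hasDerivAt
        (fun t ht => hder t (by rwa [Set.uIcc_of_le zero_le_one] at ht)) hInt, hγ1, hγ0]
    have hgcont : ContinuousOn (fun t => g (γ t)) (Set.Icc (0:ℝ) 1) := h1.norm
    have habs : |f x - f y| ≤ ‖b - a‖ * ∫ t in Set.Ioc (0:ℝ) 1, g (γ t) := by
      calc |f x - f y| = ‖∫ t in (0:ℝ)..1, (fderiv ℝ f (γ t)) (x - y)‖ := by
            rw [heq, Real.norm_eq_abs]
        _ ≤ ∫ t in (0:ℝ)..1, ‖(fderiv ℝ f (γ t)) (x - y)‖ :=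
            intervalIntegral.norm_integral_le_integral_norm zero_le_one
        _ ≤ ∫ t in (0:ℝ)..1, g (γ t) * ‖b - a‖ := by
            refine intervalIntegral.integral_mono_on zero_le_one
              ((hcontd.norm.mono (by rw [Set.uIcc_of_le zero_le_one])).intervalIntegrable)
              (((hgcont.mul continuousOn_const).mono
                (by rw [Set.uIcc_of_le zero_le_one])).intervalIntegrable) (fun t ht => ?_)
            calc ‖(fderiv ℝ f (γ t)) (x - y)‖ ≤ ‖fderiv ℝ f (γ t)‖ * ‖x - y‖ :=
                  ContinuousLinearMap.le_opNorm _ _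
              _ ≤ g (γ t) * ‖b - a‖ :=
                  mul_le_mul_of_nonneg_left (rect_norm_sub_le a b x y hx hy) (norm_nonneg _)
        _ = (∫ t in (0:ℝ)..1, g (γ t)) * ‖b - a‖ := intervalIntegral.integral_mul_const _ _
        _ = ‖b - a‖ * ∫ t in Set.Ioc (0:ℝ) 1, g (γ t) := by
            rw [intervalIntegral.integral_of_le zero_le_one, mul_comm]
    set Lt := ∫⁻ t in Set.Ioc (0:ℝ) 1, ENNReal.ofReal (g (γ t)) with hLtdef
    have hLt_toReal : (∫ t in Set.Ioc (0:ℝ) 1, g (γ t)) = Lt.toReal :=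
      integral_eq_lintegral_of_nonneg_ae (ae_of_all _ fun t => norm_nonneg _)
        ((hgcont.mono Set.Ioc_subset_Icc_self).aestronglyMeasurable measurableSet_Ioc)
    have hLt_top : Lt ≠ ⊤ := by
      have hle : Lt ≤ ENNReal.ofReal M' * volume (Set.Ioc (0:ℝ) 1) :=
        calc Lt ≤ ∫⁻ _t in Set.Ioc (0:ℝ) 1, ENNReal.ofReal M' := by
              refine lintegral_mono_ae ((ae_restrict_iff' measurableSet_Ioc).2
                (ae_of_all _ fun t ht => ?_))
              exact ENNReal.ofReal_le_ofReal
                (hM' _ (subset_closure (hγR t (Set.Ioc_subset_Icc_self ht))))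
          _ = ENNReal.ofReal M' * volume (Set.Ioc (0:ℝ) 1) := setLIntegral_const _ _
      refine ne_top_of_le_ne_top ?_ hle
      exact ENNReal.mul_ne_top ENNReal.ofReal_ne_top (by simp [Real.volume_Ioc])
    have hGeq : Lt = ∫⁻ t in Set.Ioc (0:ℝ) 1, G (γ t) := by
      refine setLIntegral_congr_fun measurableSet_Ioc (fun t ht => ?_)
      rw [hGdef]
      exact (Set.indicator_of_mem (hγR t (Set.Ioc_subset_Icc_self ht))
        (fun z => ENNReal.ofReal (g z))).symm
    calc ENNReal.ofReal |f x - f y| ≤ ENNReal.ofReal (‖b - a‖ * Lt.toReal) := by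
          rw [← hLt_toReal]; exact ENNReal.ofReal_le_ofReal habs
      _ = ENNReal.ofReal ‖b - a‖ * Lt := by
          rw [ENNReal.ofReal_mul (norm_nonneg _), ENNReal.ofReal_toReal hLt_top]
      _ = ENNReal.ofReal ‖b - a‖ * ∫⁻ t in Set.Ioc (0:ℝ) 1, G (γ t) := by rw [hGeq]
  have hscale : ∀ s : ℝ, s ∈ Set.Icc (1/2 : ℝ) 1 → ∀ w : EuclideanSpace ℝ (Fin 3),
      (∫⁻ z, G (w + s • z)) ≤ 8 * IG := by
    intro s hs w
    have hs_pos : (0:ℝ) < s := lt_of_lt_of_le (by norm_num) hs.1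
    have hs0 : s ≠ 0 := ne_of_gt hs_pos
    have hGw : Measurable fun u => G (w + u) := hGm.comp (measurable_const_add w)
    have hfinrank : Module.finrank ℝ (EuclideanSpace ℝ (Fin 3)) = 3 := by simp
    calc (∫⁻ z, G (w + s • z))
        = ∫⁻ u, G (w + u) ∂(Measure.map (s • ·) volume) :=
          (lintegral_map hGw (measurable_id.const_smul s)).symm
      _ = ENNReal.ofReal |((s ^ 3 : ℝ))⁻¹| * ∫⁻ u, G (w + u) := by
          rw [Measure.map_addHaar_smul volume hs0, lintegral_smul_measure, hfinrank, smul_eq_mul]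
      _ = ENNReal.ofReal |((s ^ 3 : ℝ))⁻¹| * IG := by
          rw [lintegral_add_left_eq_self (fun u => G u) w]
      _ ≤ 8 * IG := by
          refine mul_le_mul_left ?_ _
          have h1 : ((s:ℝ) ^ 3)⁻¹ ≤ 8 := by
            rw [inv_le_comm₀ (pow_pos hs_pos 3) (by norm_num)]
            nlinarith [pow_le_pow_left₀ (by norm_num : (0:ℝ) ≤ 1/2) hs.1 3]
          have h2 : (0:ℝ) ≤ ((s:ℝ) ^ 3)⁻¹ := le_of_lt (by positivity)
          calc ENNReal.ofReal |((s ^ 3 : ℝ))⁻¹| = ENNReal.ofReal (((s:ℝ) ^ 3)⁻¹) := by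
                rw [abs_of_nonneg h2]
            _ ≤ ENNReal.ofReal 8 := ENNReal.ofReal_le_ofReal h1
            _ = 8 := by norm_num
  have claim3 : ∀ t ∈ Set.Ioc (0:ℝ) 1,
      (∫⁻ x in R, ∫⁻ y in R, G (y + t • (x - y))) ≤ 8 * V * IG := by
    intro t ht
    rcases le_or_gt t (1/2) with h12 | h12
    · have hbound : ∀ x : EuclideanSpace ℝ (Fin 3),
          (∫⁻ y in R, G (y + t • (x - y))) ≤ 8 * IG := by
        intro x
        have hrw : ∀ y : EuclideanSpace ℝ (Fin 3),
            y + t • (x - y) = (t • x) + (1 - t) • y := by intro y; module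
        calc (∫⁻ y in R, G (y + t • (x - y))) ≤ ∫⁻ y, G (y + t • (x - y)) :=
            setLIntegral_le_lintegral _ _
          _ = ∫⁻ y, G ((t • x) + (1 - t) • y) := by simp_rw [hrw]
          _ ≤ 8 * IG := hscale (1 - t) ⟨by linarith, by linarith [ht.1]⟩ (t • x)
      calc (∫⁻ x in R, ∫⁻ y in R, G (y + t • (x - y))) ≤ ∫⁻ _x in R, (8 * IG) :=
          lintegral_mono_ae (ae_of_all _ fun x => hbound x)
        _ = 8 * IG * V := setLIntegral_const _ _
        _ = 8 * V * IG := by ring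
    · have hswapxy : (∫⁻ x in R, ∫⁻ y in R, G (y + t • (x - y)))
          = ∫⁻ y in R, ∫⁻ x in R, G (y + t • (x - y)) := by
        apply lintegral_lintegral_swap
        have hcont : Continuous fun p : EuclideanSpace ℝ (Fin 3) × EuclideanSpace ℝ (Fin 3) =>
            p.2 + t • (p.1 - p.2) := by fun_prop
        exact (hGm.comp hcont.measurable).aemeasurable
      rw [hswapxy]
      have hbound : ∀ y : EuclideanSpace ℝ (Fin 3),
          (∫⁻ x in R, G (y + t • (x - y))) ≤ 8 * IG := by
        intro y
        have hrw : ∀ x : EuclideanSpace ℝ (Fin 3),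
            y + t • (x - y) = (y - t • y) + t • x := by intro x; module
        calc (∫⁻ x in R, G (y + t • (x - y))) ≤ ∫⁻ x, G (y + t • (x - y)) :=
            setLIntegral_le_lintegral _ _
          _ = ∫⁻ x, G ((y - t • y) + t • x) := by simp_rw [hrw]
          _ ≤ 8 * IG := hscale t ⟨by linarith, ht.2⟩ (y - t • y)
      calc (∫⁻ y in R, ∫⁻ x in R, G (y + t • (x - y))) ≤ ∫⁻ _y in R, (8 * IG) :=
          lintegral_mono_ae (ae_of_all _ fun y => hbound y)
        _ = 8 * IG * V := setLIntegral_const _ _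
        _ = 8 * V * IG := by ring
  have hswap : (∫⁻ x in R, ∫⁻ y in R, ∫⁻ t in Set.Ioc (0:ℝ) 1, G (y + t • (x - y)))
      = ∫⁻ t in Set.Ioc (0:ℝ) 1, ∫⁻ x in R, ∫⁻ y in R, G (y + t • (x - y)) := by
    have step1 : ∀ x : EuclideanSpace ℝ (Fin 3),
        (∫⁻ y in R, ∫⁻ t in Set.Ioc (0:ℝ) 1, G (y + t • (x - y)))
          = ∫⁻ t in Set.Ioc (0:ℝ) 1, ∫⁻ y in R, G (y + t • (x - y)) := by
      intro x
      apply lintegral_lintegral_swap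
      have hcont : Continuous fun p : EuclideanSpace ℝ (Fin 3) × ℝ =>
          p.1 + p.2 • (x - p.1) := by fun_prop
      exact (hGm.comp hcont.measurable).aemeasurable
    simp_rw [step1]
    apply lintegral_lintegral_swap
    have hcont : Continuous fun q : (EuclideanSpace ℝ (Fin 3) × ℝ) × EuclideanSpace ℝ (Fin 3) =>
        q.2 + q.1.2 • (q.1.1 - q.2) := by fun_prop
    have hF : Measurable fun q : (EuclideanSpace ℝ (Fin 3) × ℝ) × EuclideanSpace ℝ (Fin 3) =>
        G (q.2 + q.1.2 • (q.1.1 - q.2)) := hGm.comp hcont.measurable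
    exact (hF.lintegral_prod_right' (ν := volume.restrict R)).aemeasurable
  have hBA : (ENNReal.ofReal ‖b - a‖) ≠ ⊤ := ENNReal.ofReal_ne_top
  have hVinv : V⁻¹ ≠ ⊤ := by simp [hV0]
  have main : (∫⁻ x in R, ENNReal.ofReal |f x - c|) ≤ ENNReal.ofReal ‖b - a‖ * (8 * IG) := by
    calc ∫⁻ x in R, ENNReal.ofReal |f x - c|
        ≤ ∫⁻ x in R, V⁻¹ * (ENNReal.ofReal ‖b - a‖ *
            ∫⁻ y in R, ∫⁻ t in Set.Ioc (0:ℝ) 1, G (y + t • (x - y))) := by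
          refine lintegral_mono_ae ((ae_restrict_iff' hRm).2 (ae_of_all _ fun x hx => ?_))
          refine (claim1 x hx).trans (mul_le_mul_right ?_ _)
          calc (∫⁻ y in R, ENNReal.ofReal |f x - f y|)
              ≤ ∫⁻ y in R, ENNReal.ofReal ‖b - a‖ *
                  ∫⁻ t in Set.Ioc (0:ℝ) 1, G (y + t • (x - y)) :=
                lintegral_mono_ae ((ae_restrict_iff' hRm).2 (ae_of_all _ fun y hy =>
                  claim2 x hx y hy))
            _ = ENNReal.ofReal ‖b - a‖ *
                  ∫⁻ y in R, ∫⁻ t in Set.Ioc (0:ℝ) 1, G (y + t • (x - y)) :=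
                lintegral_const_mul' _ _ hBA
      _ = V⁻¹ * ENNReal.ofReal ‖b - a‖ *
            ∫⁻ x in R, ∫⁻ y in R, ∫⁻ t in Set.Ioc (0:ℝ) 1, G (y + t • (x - y)) := by
          rw [← lintegral_const_mul' _ _ (by exact ENNReal.mul_ne_top hVinv hBA)]
          simp_rw [mul_assoc]
      _ = V⁻¹ * ENNReal.ofReal ‖b - a‖ *
            ∫⁻ t in Set.Ioc (0:ℝ) 1, ∫⁻ x in R, ∫⁻ y in R, G (y + t • (x - y)) := by rw [hswap]
      _ ≤ V⁻¹ * ENNReal.ofReal ‖b - a‖ * (8 * V * IG) := by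
          refine mul_le_mul_right ?_ _
          calc (∫⁻ t in Set.Ioc (0:ℝ) 1, ∫⁻ x in R, ∫⁻ y in R, G (y + t • (x - y)))
              ≤ ∫⁻ _t in Set.Ioc (0:ℝ) 1, (8 * V * IG) :=
                lintegral_mono_ae ((ae_restrict_iff' measurableSet_Ioc).2
                  (ae_of_all _ fun t ht => claim3 t ht))
            _ = (8 * V * IG) * volume (Set.Ioc (0:ℝ) 1) := by rw [setLIntegral_const]
            _ = 8 * V * IG := by simp [Real.volume_Ioc]
      _ = ENNReal.ofReal ‖b - a‖ * (8 * IG) * (V⁻¹ * V) := by ring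
      _ = ENNReal.ofReal ‖b - a‖ * (8 * IG) := by
          rw [ENNReal.inv_mul_cancel hV0 hVtop, mul_one]
  have lhs_eq : ∫ y in R, |f y - c| = (∫⁻ y in R, ENNReal.ofReal |f y - c|).toReal :=
    integral_eq_lintegral_of_nonneg_ae (ae_of_all _ fun y => abs_nonneg _)
      (((hfc.mono subset_closure).sub continuousOn_const).abs.aestronglyMeasurable hRm)
  have rhs_ne : ENNReal.ofReal ‖b - a‖ * (8 * IG) ≠ ⊤ :=
    ENNReal.mul_ne_top hBA (ENNReal.mul_ne_top (by simp) hIG_top)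
  calc ∫ y in R, |f y - c| = (∫⁻ y in R, ENNReal.ofReal |f y - c|).toReal := lhs_eq
    _ ≤ (ENNReal.ofReal ‖b - a‖ * (8 * IG)).toReal := ENNReal.toReal_mono rhs_ne main
    _ = ‖b - a‖ * (8 * IG.toReal) := by
        rw [ENNReal.toReal_mul, ENNReal.toReal_ofReal (norm_nonneg _), ENNReal.toReal_mul]
        norm_num
    _ = 8 * ‖b - a‖ * ∫ y in R, g y := by rw [hIG_toReal]; ring
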